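/- Suppose φ is a continuous flow on a compact metric space X with open set of fixed points. Then φ is K-expansive if and only if φ is K*-expansive. -/

import Mathlib

open Filter Topology Metric Set

private lemma flow_period_int {X : Type*} (φ : ℝ → X → X)
    (h0 : ∀ x, φ 0 x = x) (hadd : ∀ t s x, φ (t + s) x = φ t (φ s x))
    {p : ℝ} {x : X} (hp : φ p x = x) : ∀ m : ℤ, φ ((m : ℝ) * p) x = x := by
  have hneg : φ (-p) x = x := by
    calc φ (-p) x = φ (-p) (φ p x) := by rw [hp]
      _ = φ (-p + p) x := (hadd _ _ _).symm
      _ = x := by rw [neg_add_cancel, h0]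
  intro m
  induction m using Int.induction_on with
  | zero => simpa using h0 x
  | succ i hi =>
      have h1 : ((i + 1 : ℤ) : ℝ) * p = (i : ℝ) * p + p := by push_cast; ring
      rw [h1, hadd, hp]; exact_mod_cast hi
  | pred i hi =>
      have h1 : ((-i - 1 : ℤ) : ℝ) * p = (-(i : ℝ)) * p + -p := by push_cast; ring
      rw [h1, hadd, hneg]; exact_mod_cast hi

private lemma kexp_core {X : Type*} [MetricSpace X] (φ : ℝ → X → X)
    (h0 : ∀ x, φ 0 x = x) (hadd : ∀ t s x, φ (t + s) x = φ t (φ s x))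
    {ε ε' δ' : ℝ} (hε'pos : 0 < ε') (hε'ε : ε' ≤ ε)
    (hstar : ∀ (x y : X) (s : ℝ → ℝ), StrictMono s → Function.Surjective s → s 0 = 0 →
      (∀ t, dist (φ t x) (φ (s t) y) < δ') →
      ∃ t₀ τ : ℝ, |τ| < ε' / 4 ∧ φ (s t₀) y = φ (t₀ + τ) x)
    {μ : ℝ} (hμ : 0 < μ)
    (hfail : ∃ x y s, StrictMono s ∧ Function.Surjective s ∧ s 0 = 0 ∧
      (∀ t, dist (φ t x) (φ (s t) y) < min μ δ') ∧ ∀ τ : ℝ, |τ| < ε → y ≠ φ τ x) :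
    ∃ (u : X) (r : ℝ), (¬ ∀ t, φ t u = u) ∧ dist (φ r u) u < μ ∧
      ε' / 2 ≤ |r| ∧ |r| < ε' / 2 + μ := by
  obtain ⟨x, y, s, hsm, hsurj, hs0, hclose, hbad⟩ := hfail
  have hcloseμ : ∀ t, dist (φ t x) (φ (s t) y) < μ :=
    fun t => (hclose t).trans_le (min_le_left _ _)
  have hcloseδ : ∀ t, dist (φ t x) (φ (s t) y) < δ' :=
    fun t => (hclose t).trans_le (min_le_right _ _)
  obtain ⟨t₀, τ, hτ, heq⟩ := hstar x y s hsm hsurj hs0 hcloseδ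
  set g : ℝ → ℝ := fun t => τ + s t - s t₀ - t + t₀ with hg
  have key : ∀ t, φ (s t) y = φ (t + g t) x := by
    intro t
    have h1 : t + g t = (s t - s t₀) + (t₀ + τ) := by simp only [hg]; ring
    have h2 : s t - s t₀ + s t₀ = s t := by ring
    rw [h1, hadd, ← heq, ← hadd, h2]
  set P : Set ℝ := {p : ℝ | φ p x = x} with hPdef
  have hP0 : (0 : ℝ) ∈ P := h0 x
  have hPne : P.Nonempty := ⟨0, hP0⟩
  have hshift : ∀ q ∈ P, ∀ c : ℝ, φ (c - q) x = φ c x := by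
    intro q hq c
    have h1 : (c - q) + q = c := by ring
    calc φ (c - q) x = φ (c - q) (φ q x) := by rw [hq]
      _ = φ ((c - q) + q) x := (hadd _ _ _).symm
      _ = φ c x := by rw [h1]
  have hs_cont : Continuous s := by
    have := (StrictMono.orderIsoOfSurjective s hsm hsurj).continuous
    rwa [StrictMono.coe_orderIsoOfSurjective] at this
  have hcg : Continuous g := by
    simp only [hg]
    exact (((continuous_const.add hs_cont).sub continuous_const).sub continuous_id).add
      continuous_const
  have hHcont : Continuous fun t => infDist (g t) P :=
    (continuous_infDist_pt P).comp hcg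
  have hy : y = φ (g 0) x := by
    have k0 := key 0
    rwa [hs0, h0, zero_add] at k0
  have hH0 : ε' ≤ infDist (g 0) P := by
    by_contra hlt
    push_neg at hlt
    obtain ⟨q, hq, hqd⟩ := (infDist_lt_iff hPne).mp hlt
    have h1 : |g 0 - q| < ε := lt_of_lt_of_le (by rwa [← Real.dist_eq]) hε'ε
    exact hbad _ h1 (by rw [hy, ← hshift q hq (g 0)])
  have hHt₀ : infDist (g t₀) P < ε' / 2 := by
    have hgt₀ : g t₀ = τ := by simp only [hg]; ring
    calc infDist (g t₀) P ≤ dist (g t₀) 0 := infDist_le_dist_of_mem hP0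
      _ = |τ| := by rw [hgt₀, Real.dist_eq, sub_zero]
      _ < ε' / 2 := hτ.trans_le (by linarith)
  have hmem : ε' / 2 ∈ uIcc (infDist (g 0) P) (infDist (g t₀) P) := by
    rw [Set.mem_uIcc]
    right
    exact ⟨hHt₀.le, by linarith⟩
  obtain ⟨ts, -, hts0⟩ := intermediate_value_uIcc (hHcont.continuousOn) hmem
  have hts : infDist (g ts) P = ε' / 2 := hts0
  obtain ⟨q, hq, hqd⟩ := (infDist_lt_iff hPne).mp
    (show infDist (g ts) P < ε' / 2 + μ by rw [hts]; linarith)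
  refine ⟨φ ts x, g ts - q, ?_, ?_, ?_, ?_⟩
  · intro hfix
    have hxu : x = φ ts x := by
      calc x = φ 0 x := (h0 x).symm
        _ = φ (-ts + ts) x := by rw [neg_add_cancel]
        _ = φ (-ts) (φ ts x) := hadd _ _ _
        _ = φ ts x := hfix (-ts)
    have hmemP : g ts ∈ P := by
      show φ (g ts) x = x
      rw [hxu]
      exact hfix _
    have h1 : infDist (g ts) P = 0 :=
      le_antisymm ((infDist_le_dist_of_mem hmemP).trans_eq (dist_self _)) infDist_nonneg
    rw [hts] at h1; linarith
  · have h1 : φ (g ts - q) (φ ts x) = φ (s ts) y := by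
      calc φ (g ts - q) (φ ts x) = φ ((g ts - q) + ts) x := (hadd _ _ _).symm
        _ = φ ((ts + g ts) - q) x := by ring_nf
        _ = φ (ts + g ts) x := hshift q hq _
        _ = φ (s ts) y := (key ts).symm
    rw [h1, dist_comm]
    exact hcloseμ ts
  · rw [← hts, ← Real.dist_eq]
    exact infDist_le_dist_of_mem hq
  · rwa [← Real.dist_eq]

private lemma kexp_subclaim {X : Type*} [MetricSpace X] [CompactSpace X] (φ : ℝ → X → X)
    (hcont : Continuous fun p : ℝ × X => φ p.1 p.2)
    (h0 : ∀ x, φ 0 x = x) (hadd : ∀ t s x, φ (t + s) x = φ t (φ s x))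
    (hopen : IsOpen {x : X | ∀ t, φ t x = x})
    {ε ε' : ℝ} (hε'pos : 0 < ε') (hε'ε : ε' ≤ ε)
    (hstarAll : ∀ e > (0:ℝ), ∃ δ > (0:ℝ), ∀ (x y : X) (s : ℝ → ℝ),
        StrictMono s → Function.Surjective s → s 0 = 0 →
        (∀ t, dist (φ t x) (φ (s t) y) < δ) →
        ∃ t₀ τ : ℝ, |τ| < e ∧ φ (s t₀) y = φ (t₀ + τ) x)
    (hfailAll : ∀ δ > (0:ℝ), ∃ x y s, StrictMono s ∧ Function.Surjective s ∧ s 0 = 0 ∧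
        (∀ t, dist (φ t x) (φ (s t) y) < δ) ∧ ∀ τ : ℝ, |τ| < ε → y ≠ φ τ x) :
    ∃ (z : X) (r : ℝ), (¬ ∀ t, φ t z = z) ∧ φ r z = z ∧ r ≠ 0 ∧ |r| ≤ ε' := by
  obtain ⟨δ', hδ'pos, hstar⟩ := hstarAll (ε' / 4) (by linarith)
  have hinvpos : ∀ n : ℕ, (0:ℝ) < 1 / (n + 1) := fun n => by positivity
  have hdata : ∀ n : ℕ, ∃ (u : X) (r : ℝ), (¬ ∀ t, φ t u = u) ∧
      dist (φ r u) u < 1 / (n + 1) ∧ ε' / 2 ≤ |r| ∧ |r| < ε' / 2 + 1 / (n + 1) :=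
    fun n => kexp_core φ h0 hadd hε'pos hε'ε hstar (hinvpos n)
      (hfailAll (min (1 / (n + 1)) δ') (lt_min (hinvpos n) hδ'pos))
  choose u r hnf hd hr1 hr2 using hdata
  have hinvle : ∀ n : ℕ, (1:ℝ) / (n + 1) ≤ 1 := by
    intro n
    rw [div_le_one (by positivity)]
    have : (0:ℝ) ≤ (n:ℝ) := Nat.cast_nonneg n
    linarith
  have hmemIcc : ∀ n : ℕ, (u n, r n) ∈ (Set.univ : Set X) ×ˢ Icc (-(ε'/2+1)) (ε'/2+1) := by
    intro n
    refine ⟨trivial, ?_⟩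
    have h1 : |r n| ≤ ε'/2 + 1 := (hr2 n).le.trans (by linarith [hinvle n])
    exact abs_le.mp h1
  obtain ⟨⟨z, rr⟩, -, m, hm, hlim⟩ :=
    (isCompact_univ.prod isCompact_Icc).tendsto_subseq hmemIcc
  have hu_lim : Tendsto (fun j => u (m j)) atTop (𝓝 z) :=
    (continuous_fst.tendsto _).comp hlim
  have hr_lim : Tendsto (fun j => r (m j)) atTop (𝓝 rr) :=
    (continuous_snd.tendsto _).comp hlim
  have hinv0 : Tendsto (fun j => (1:ℝ) / (m j + 1)) atTop (𝓝 0) :=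
    tendsto_one_div_add_atTop_nhds_zero_nat.comp hm.tendsto_atTop
  have ha_lim1 : Tendsto (fun j => φ (r (m j)) (u (m j))) atTop (𝓝 (φ rr z)) := by
    have hc : Continuous fun q : X × ℝ => φ q.2 q.1 :=
      hcont.comp (continuous_snd.prodMk continuous_fst)
    exact (hc.tendsto (z, rr)).comp hlim
  have ha_lim2 : Tendsto (fun j => φ (r (m j)) (u (m j))) atTop (𝓝 z) := by
    rw [tendsto_iff_dist_tendsto_zero]
    apply squeeze_zero (fun j => dist_nonneg)
      (g := fun j => 1 / (m j + 1) + dist (u (m j)) z)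
    · intro j
      calc dist (φ (r (m j)) (u (m j))) z
          ≤ dist (φ (r (m j)) (u (m j))) (u (m j)) + dist (u (m j)) z := dist_triangle _ _ _
        _ ≤ 1 / (m j + 1) + dist (u (m j)) z := by
            linarith [hd (m j)]
    · have h2 := tendsto_iff_dist_tendsto_zero.mp hu_lim
      simpa using hinv0.add h2
  have hper : φ rr z = z := tendsto_nhds_unique ha_lim1 ha_lim2
  have habs : Tendsto (fun j => |r (m j)|) atTop (𝓝 |rr|) :=
    (continuous_abs.tendsto _).comp hr_lim
  have hrr1 : ε' / 2 ≤ |rr| := ge_of_tendsto' habs (fun j => hr1 (m j))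
  have hrr2 : |rr| ≤ ε' := by
    have h1 := le_of_tendsto_of_tendsto' habs (tendsto_const_nhds.add hinv0)
      (fun j => (hr2 (m j)).le)
    simp only [add_zero] at h1
    linarith
  have hrrne : rr ≠ 0 := by
    intro h
    rw [h, abs_zero] at hrr1
    linarith
  refine ⟨z, rr, ?_, hper, hrrne, hrr2⟩
  intro hz
  have hF : {x : X | ∀ t, φ t x = x} ∈ 𝓝 z := hopen.mem_nhds hz
  obtain ⟨j, hj⟩ := (hu_lim.eventually_mem hF).exists
  exact hnf (m j) hj

theorem stmt6 {X : Type*} [MetricSpace X] [CompactSpace X]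
    (φ : ℝ → X → X)
    (hcont : Continuous fun p : ℝ × X => φ p.1 p.2)
    (h0 : ∀ x, φ 0 x = x)
    (hadd : ∀ t s x, φ (t + s) x = φ t (φ s x))
    (hopen : IsOpen {x : X | ∀ t, φ t x = x}) :
    (∀ ε > (0:ℝ), ∃ δ > (0:ℝ), ∀ (x y : X) (s : ℝ → ℝ),
        StrictMono s → Function.Surjective s → s 0 = 0 →
        (∀ t, dist (φ t x) (φ (s t) y) < δ) →
        ∃ τ : ℝ, |τ| < ε ∧ y = φ τ x) ↔
      (∀ ε > (0:ℝ), ∃ δ > (0:ℝ), ∀ (x y : X) (s : ℝ → ℝ),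
        StrictMono s → Function.Surjective s → s 0 = 0 →
        (∀ t, dist (φ t x) (φ (s t) y) < δ) →
        ∃ t₀ τ : ℝ, |τ| < ε ∧ φ (s t₀) y = φ (t₀ + τ) x) := by
  constructor
  · intro hK ε hε
    obtain ⟨δ, hδ, H⟩ := hK ε hε
    refine ⟨δ, hδ, fun x y s h1 h2 h3 h4 => ?_⟩
    obtain ⟨τ, hτ, hy⟩ := H x y s h1 h2 h3 h4
    exact ⟨0, τ, hτ, by rw [h3, h0, hy, zero_add]⟩
  · intro hstarAll
    by_contra hK
    push_neg at hK
    obtain ⟨ε, hε, hfailAll⟩ := hK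
    have hsub : ∀ k : ℕ, ∃ (z : X) (r : ℝ), (¬ ∀ t, φ t z = z) ∧ φ r z = z ∧
        r ≠ 0 ∧ |r| ≤ ε / (k + 1) := by
      intro k
      refine kexp_subclaim φ hcont h0 hadd hopen (ε' := ε / (k + 1)) (by positivity) ?_
        hstarAll hfailAll
      rw [div_le_iff₀ (by positivity)]
      nlinarith [Nat.cast_nonneg (α := ℝ) k]
    choose z r hnf hper hrne hrle using hsub
    obtain ⟨w, -, m, hm, hlim⟩ :=
      (isCompact_univ : IsCompact (Set.univ : Set X)).tendsto_subseq
        (fun k => Set.mem_univ (z k))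
    have hinv0 : Tendsto (fun j => ε / (m j + 1)) atTop (𝓝 0) := by
      have h1 : Tendsto (fun j => (1:ℝ) / (m j + 1)) atTop (𝓝 0) :=
        tendsto_one_div_add_atTop_nhds_zero_nat.comp hm.tendsto_atTop
      have h2 := h1.const_mul ε
      simp only [mul_zero] at h2
      convert h2 using 2 with j
      ring
    have hwfix : ∀ t, φ t w = w := by
      intro t
      set ρ : ℕ → ℝ := fun j => t - round (t / r (m j)) * r (m j) with hρ
      have hzeq : ∀ j, φ t (z (m j)) = φ (ρ j) (z (m j)) := by
        intro j
        have hp := flow_period_int φ h0 hadd (hper (m j)) (round (t / r (m j)))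
        have h1 : t = ρ j + (round (t / r (m j)) : ℝ) * r (m j) := by
          simp only [hρ]; ring
        calc φ t (z (m j)) = φ (ρ j + (round (t / r (m j)) : ℝ) * r (m j)) (z (m j)) := by
              rw [← h1]
          _ = φ (ρ j) (φ ((round (t / r (m j)) : ℝ) * r (m j)) (z (m j))) := hadd _ _ _
          _ = φ (ρ j) (z (m j)) := by rw [hp]
      have hρ_bound : ∀ j, |ρ j| ≤ ε / (m j + 1) := by
        intro j
        have hr0 := hrne (m j)
        have h1 : ρ j = r (m j) * (t / r (m j) - (round (t / r (m j)) : ℝ)) := by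
          simp only [hρ]
          field_simp
        calc |ρ j| = |r (m j)| * |t / r (m j) - (round (t / r (m j)) : ℝ)| := by
              rw [h1, abs_mul]
          _ ≤ |r (m j)| * (1 / 2) :=
              mul_le_mul_of_nonneg_left (abs_sub_round _) (abs_nonneg _)
          _ ≤ |r (m j)| := by linarith [abs_nonneg (r (m j))]
          _ ≤ ε / (m j + 1) := hrle (m j)
      have hρ0 : Tendsto ρ atTop (𝓝 0) := squeeze_zero_norm hρ_bound hinv0
      have hlhs : Tendsto (fun j => φ t (z (m j))) atTop (𝓝 (φ t w)) := by
        have hφt : Continuous fun x => φ t x :=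
          hcont.comp (continuous_const.prodMk continuous_id)
        exact (hφt.tendsto w).comp hlim
      have hrhs : Tendsto (fun j => φ t (z (m j))) atTop (𝓝 (φ 0 w)) := by
        have h2 : Tendsto (fun j => (ρ j, z (m j))) atTop (𝓝 ((0:ℝ), w)) :=
          hρ0.prodMk_nhds hlim
        have h3 := (hcont.tendsto ((0:ℝ), w)).comp h2
        simp only [Function.comp_def] at h3 ⊢
        simp only [hzeq]
        exact h3
      have := tendsto_nhds_unique hlhs hrhs
      rwa [h0] at this
    have hF : {x : X | ∀ t, φ t x = x} ∈ 𝓝 w := hopen.mem_nhds hwfix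
    obtain ⟨j, hj⟩ := (hlim.eventually_mem hF).exists
    exact hnf (m j) hj
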